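/- Let α ∈ (0,2), let c ≥ 0 and C < ∞, and let ν be a measure on (0,∞) with y^α ν((y,∞)) ≤ C for all y > 0 and y^α ν((y,∞)) → c as y → 0⁺. Then for every x > 0: lim_{ε → 0⁺} ε^α ∫_{(εx,∞)} min(u²/ε², 1) ν(du) = α c ∫_x^∞ min(z², 1) z^{−1−α} dz. -/

import Mathlib

open MeasureTheory Filter Topology Set

lemma aux_comp (α x : ℝ) (hα1 : 0 < α) (hα2 : α < 2) (hx : 0 < x) :
    ∫ t in Ioo (0:ℝ) 1, (max x (Real.sqrt t)) ^ (-α) =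
      α * ∫ z in Ioi x, min (z ^ 2) 1 * z ^ (-1 - α) := by
  have hαne : α ≠ 0 := hα1.ne'
  rcases le_or_gt 1 x with hx1 | hx1
  · -- x ≥ 1
    have hL : ∫ t in Ioo (0:ℝ) 1, (max x (Real.sqrt t)) ^ (-α) = x ^ (-α) := by
      rw [setIntegral_congr_fun measurableSet_Ioo
        (g := fun _ : ℝ => x ^ (-α)) (fun t ht => by
          rw [max_eq_left]
          calc Real.sqrt t ≤ Real.sqrt 1 := Real.sqrt_le_sqrt ht.2.le
            _ = 1 := Real.sqrt_one
            _ ≤ x := hx1)]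
      simp [Real.volume_Ioo]
    have hR : ∫ z in Ioi x, min (z ^ 2) 1 * z ^ (-1 - α) = x ^ (-α) / α := by
      rw [setIntegral_congr_fun measurableSet_Ioi
        (g := fun z : ℝ => z ^ (-1 - α)) (fun z hz => by
          have hz1 : (1:ℝ) ≤ z := hx1.trans (le_of_lt hz)
          rw [min_eq_right (one_le_pow₀ hz1), one_mul])]
      rw [integral_Ioi_rpow_of_lt (by linarith) hx]
      rw [show -1 - α + 1 = -α by ring]
      field_simp
    rw [hL, hR]; field_simp
  · -- x < 1
    have hx2 : x ^ 2 ≤ 1 := by nlinarith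
    have hx2pos : (0:ℝ) < x ^ 2 := by positivity
    -- LHS
    have hcont : Continuous fun t : ℝ => (max x (Real.sqrt t)) ^ (-α) := by
      apply Continuous.rpow_const (continuous_const.max Real.continuous_sqrt)
      intro t
      exact Or.inl (ne_of_gt (lt_of_lt_of_le hx (le_max_left _ _)))
    have hL : ∫ t in Ioo (0:ℝ) 1, (max x (Real.sqrt t)) ^ (-α)
        = x ^ (2 - α) + (1 - x ^ (2 - α)) / (1/2 * -α + 1) := by
      rw [← integral_Ioc_eq_integral_Ioo, ← intervalIntegral.integral_of_le zero_le_one,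
        ← intervalIntegral.integral_add_adjacent_intervals
          (hcont.intervalIntegrable 0 (x ^ 2)) (hcont.intervalIntegrable (x ^ 2) 1)]
      have h1 : ∫ t in (0:ℝ)..(x ^ 2), (max x (Real.sqrt t)) ^ (-α) = x ^ (2 - α) := by
        rw [intervalIntegral.integral_congr (g := fun _ => x ^ (-α)) (fun t ht => by
          rw [uIcc_of_le (by positivity)] at ht
          rw [max_eq_left]
          calc Real.sqrt t ≤ Real.sqrt (x ^ 2) := Real.sqrt_le_sqrt ht.2
            _ = x := Real.sqrt_sq hx.le)]
        rw [intervalIntegral.integral_const, smul_eq_mul, sub_zero,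
          ← Real.rpow_natCast x 2, ← Real.rpow_add hx]
        norm_num
        rw [show (2:ℝ) + -α = 2 - α by ring]
      have h2 : ∫ t in (x ^ 2:ℝ)..1, (max x (Real.sqrt t)) ^ (-α)
          = (1 - x ^ (2 - α)) / (1/2 * -α + 1) := by
        rw [intervalIntegral.integral_congr (g := fun t => t ^ (1/2 * -α)) (fun t ht => by
          rw [uIcc_of_le hx2] at ht
          have ht0 : (0:ℝ) < t := lt_of_lt_of_le hx2pos ht.1
          rw [max_eq_right (by
            calc x = Real.sqrt (x ^ 2) := (Real.sqrt_sq hx.le).symm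
              _ ≤ Real.sqrt t := Real.sqrt_le_sqrt ht.1),
            Real.sqrt_eq_rpow, ← Real.rpow_mul ht0.le])]
        rw [integral_rpow (Or.inl (by linarith))]
        rw [Real.one_rpow, ← Real.rpow_natCast x 2, ← Real.rpow_mul hx.le,
          show ((2:ℕ):ℝ) * (1/2 * -α + 1) = 2 - α by push_cast; ring]
      rw [h1, h2]
    -- RHS
    have hR : ∫ z in Ioi x, min (z ^ 2) 1 * z ^ (-1 - α)
        = (1 - x ^ (2 - α)) / (2 - α) + 1 / α := by
      have hint1 : IntegrableOn (fun z : ℝ => min (z ^ 2) 1 * z ^ (-1 - α)) (Ioc x 1) := by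
        apply ContinuousOn.integrableOn_Icc (a := x) (b := 1) ?_ |>.mono_set Ioc_subset_Icc_self
        exact ((continuous_pow 2).min continuous_const).continuousOn.mul
          (continuousOn_id.rpow_const fun z hz => Or.inl (ne_of_gt (lt_of_lt_of_le hx hz.1)))
      have hint2 : IntegrableOn (fun z : ℝ => min (z ^ 2) 1 * z ^ (-1 - α)) (Ioi 1) := by
        apply (integrableOn_Ioi_rpow_of_lt (by linarith : -1 - α < -1) one_pos).congr_fun
          (fun z hz => ?_) measurableSet_Ioi
        rw [min_eq_right (one_le_pow₀ (le_of_lt hz)), one_mul]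
      rw [← Ioc_union_Ioi_eq_Ioi hx1.le,
        setIntegral_union (Ioc_disjoint_Ioi le_rfl) measurableSet_Ioi hint1 hint2]
      have e1 : ∫ z in Ioc x 1, min (z ^ 2) 1 * z ^ (-1 - α) = (1 - x ^ (2 - α)) / (2 - α) := by
        rw [setIntegral_congr_fun measurableSet_Ioc (g := fun z : ℝ => z ^ (1 - α)) (fun z hz => by
          have hz0 : (0:ℝ) < z := hx.trans hz.1
          rw [min_eq_left (pow_le_one₀ hz0.le hz.2), ← Real.rpow_natCast z 2,
            ← Real.rpow_add hz0]
          norm_num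
          rw [show (2:ℝ) + (-1 - α) = 1 - α by ring])]
        rw [← intervalIntegral.integral_of_le hx1.le, integral_rpow (Or.inl (by linarith))]
        rw [Real.one_rpow, show 1 - α + 1 = 2 - α by ring]
      have e2 : ∫ z in Ioi (1:ℝ), min (z ^ 2) 1 * z ^ (-1 - α) = 1 / α := by
        rw [setIntegral_congr_fun measurableSet_Ioi (g := fun z : ℝ => z ^ (-1 - α))
          (fun z hz => by rw [min_eq_right (one_le_pow₀ (le_of_lt hz)), one_mul])]
        rw [integral_Ioi_rpow_of_lt (by linarith) one_pos, Real.one_rpow,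
          show -1 - α + 1 = -α by ring, neg_div_neg_eq]
      rw [e1, e2]
    rw [hL, hR]
    have h2α : (2:ℝ) - α ≠ 0 := by linarith
    rw [show (1:ℝ)/2 * -α + 1 = (2 - α)/2 by ring, div_div_eq_mul_div]
    field_simp
    ring

lemma aux_layer (x ε : ℝ) (ν : Measure ℝ) (hx : 0 < x) (hε : 0 < ε)
    (hfin : ∀ y : ℝ, 0 < y → ν (Ioi y) < ⊤) :
    ∫ u in Ioi (ε * x), min (u ^ 2 / ε ^ 2) 1 ∂ν
      = ∫ t in Ioo (0:ℝ) 1, (ν (Ioi (ε * max x (Real.sqrt t)))).toReal := by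
  set μ := ν.restrict (Ioi (ε * x)) with hμ
  haveI : IsFiniteMeasure μ :=
    ⟨by rw [hμ, Measure.restrict_apply_univ]; exact hfin _ (by positivity)⟩
  have hSm : ∀ t : ℝ, MeasurableSet {u : ℝ | t < min (u ^ 2 / ε ^ 2) 1} := fun t =>
    measurableSet_lt measurable_const
      (((continuous_pow 2).div_const _).min continuous_const).measurable
  have hfm : AEStronglyMeasurable (fun u : ℝ => min (u ^ 2 / ε ^ 2) 1) μ :=
    (((continuous_pow 2).div_const _).min continuous_const).aestronglyMeasurable
  have hint : Integrable (fun u : ℝ => min (u ^ 2 / ε ^ 2) 1) μ := by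
    refine (integrable_const (1:ℝ)).mono' hfm (ae_of_all _ fun u => ?_)
    rw [Real.norm_eq_abs, abs_of_nonneg (le_min (by positivity) zero_le_one)]
    exact min_le_right _ _
  have key := hint.integral_eq_integral_meas_lt
    (ae_of_all _ fun u => le_min (by positivity) zero_le_one)
  rw [key]
  rw [setIntegral_eq_of_subset_of_forall_diff_eq_zero measurableSet_Ioi Ioo_subset_Ioi_self
    (fun t ht => by
      have h1t : (1:ℝ) ≤ t := le_of_not_gt fun h => ht.2 ⟨ht.1, h⟩
      have hempty : {u : ℝ | t < min (u ^ 2 / ε ^ 2) 1} = ∅ := by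
        ext u
        simp only [mem_setOf_eq, mem_empty_iff_false, iff_false, not_lt]
        exact (min_le_right _ _).trans h1t
      rw [hempty]
      simp)]
  apply setIntegral_congr_fun measurableSet_Ioo
  intro t ht
  have hset : {u : ℝ | t < min (u ^ 2 / ε ^ 2) 1} ∩ Ioi (ε * x)
      = Ioi (ε * max x (Real.sqrt t)) := by
    ext u
    simp only [mem_inter_iff, mem_setOf_eq, mem_Ioi, lt_min_iff]
    constructor
    · rintro ⟨⟨h1, _⟩, h2⟩
      have hu0 : (0:ℝ) < u := lt_trans (by positivity) h2
      rw [mul_max_of_nonneg _ _ hε.le]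
      refine max_lt h2 ?_
      have : Real.sqrt (ε ^ 2 * t) < u := by
        rw [Real.sqrt_lt' hu0]
        rw [lt_div_iff₀ (by positivity)] at h1
        linarith
      rwa [Real.sqrt_mul (by positivity), Real.sqrt_sq hε.le] at this
    · intro h
      rw [mul_max_of_nonneg _ _ hε.le, max_lt_iff] at h
      have hu0 : (0:ℝ) < u := lt_trans (by positivity) h.1
      refine ⟨⟨?_, ht.2⟩, h.1⟩
      have : Real.sqrt (ε ^ 2 * t) < u := by
        rw [Real.sqrt_mul (by positivity), Real.sqrt_sq hε.le]
        exact h.2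
      rw [Real.sqrt_lt' hu0] at this
      rw [lt_div_iff₀ (by positivity)]
      linarith
  show ((ν.restrict (Ioi (ε * x))) {u : ℝ | t < min (u ^ 2 / ε ^ 2) 1}).toReal
      = (ν (Ioi (ε * max x (Real.sqrt t)))).toReal
  rw [Measure.restrict_apply (hSm t), hset]

lemma aux_id (α ε m T : ℝ) (hε : 0 < ε) (hm : 0 < m) :
    ε ^ α * T = m ^ (-α) * ((ε * m) ^ α * T) := by
  rw [Real.mul_rpow hε.le hm.le]
  have h1 : m ^ (-α) * m ^ α = 1 := by
    rw [← Real.rpow_add hm]; simp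
  calc ε ^ α * T = (m ^ (-α) * m ^ α) * (ε ^ α * T) := by rw [h1, one_mul]
    _ = m ^ (-α) * (ε ^ α * m ^ α * T) := by ring


/-- for a measure `ν` on `(0,∞)` with uniformly bounded stable-like tails
`y^α ν((y,∞)) ≤ C` and tail limit `y^α ν((y,∞)) → c` as `y → 0⁺` (`α ∈ (0,2)`), for every
`x > 0`,
`ε^α ∫_{(εx,∞)} min(u²/ε², 1) ν(du) → α c ∫_x^∞ min(z²,1) z^{−1−α} dz` as `ε → 0⁺`. -/
theorem stmt9 (α c C : ℝ) (ν : Measure ℝ)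
    (hα1 : 0 < α) (hα2 : α < 2) (hc : 0 ≤ c)
    (hfin : ∀ y : ℝ, 0 < y → ν (Ioi y) < ⊤)
    (hbnd : ∀ y : ℝ, 0 < y → y ^ α * (ν (Ioi y)).toReal ≤ C)
    (hlim : Tendsto (fun y : ℝ => y ^ α * (ν (Ioi y)).toReal) (𝓝[>] 0) (𝓝 c)) :
    ∀ x : ℝ, 0 < x →
      Tendsto (fun ε : ℝ => ε ^ α * ∫ u in Ioi (ε * x), min (u ^ 2 / ε ^ 2) 1 ∂ν)
        (𝓝[>] 0)
        (𝓝 (α * c * ∫ z in Ioi x, min (z ^ 2) 1 * z ^ (-1 - α))) := by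
  intro x hx
  have hC : 0 ≤ C := le_trans (by positivity) (hbnd 1 one_pos)
  have hval : α * c * ∫ z in Ioi x, min (z ^ 2) 1 * z ^ (-1 - α)
      = ∫ t in Ioo (0:ℝ) 1, c * (max x (Real.sqrt t)) ^ (-α) := by
    rw [integral_const_mul, aux_comp α x hα1 hα2 hx]; ring
  rw [hval]
  have hmono : ∀ ε : ℝ, 0 ≤ ε →
      Measurable (fun t : ℝ => (ν (Ioi (ε * max x (Real.sqrt t)))).toReal) := fun ε hε =>
    ENNReal.measurable_toReal.comp (Antitone.measurable (fun a b hab =>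
      measure_mono (Ioi_subset_Ioi (mul_le_mul_of_nonneg_left
        (max_le_max le_rfl (Real.sqrt_le_sqrt hab)) hε))))
  have hdct : Tendsto
      (fun ε : ℝ => ∫ t in Ioo (0:ℝ) 1, ε ^ α * (ν (Ioi (ε * max x (Real.sqrt t)))).toReal)
      (𝓝[>] 0) (𝓝 (∫ t in Ioo (0:ℝ) 1, c * (max x (Real.sqrt t)) ^ (-α))) := by
    apply tendsto_integral_filter_of_dominated_convergence (fun _ => C * x ^ (-α))
    · filter_upwards [self_mem_nhdsWithin] with ε (hε : ε ∈ Ioi (0:ℝ))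
      exact (measurable_const.mul (hmono ε (le_of_lt hε))).aestronglyMeasurable
    · filter_upwards [self_mem_nhdsWithin] with ε (hε : ε ∈ Ioi (0:ℝ))
      refine (ae_restrict_iff' measurableSet_Ioo).2 (ae_of_all _ fun t ht => ?_)
      set m := max x (Real.sqrt t) with hm
      have hm0 : 0 < m := lt_of_lt_of_le hx (le_max_left _ _)
      rw [Real.norm_eq_abs, abs_of_nonneg (mul_nonneg
        (Real.rpow_nonneg (le_of_lt hε) _) ENNReal.toReal_nonneg),
        aux_id α ε m _ hε hm0]
      calc m ^ (-α) * ((ε * m) ^ α * (ν (Ioi (ε * m))).toReal)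
          ≤ m ^ (-α) * C := by
            apply mul_le_mul_of_nonneg_left (hbnd (ε * m) (mul_pos hε hm0)) (by positivity)
        _ ≤ x ^ (-α) * C := mul_le_mul_of_nonneg_right
            (Real.rpow_le_rpow_of_nonpos hx (le_max_left _ _) (neg_nonpos.2 hα1.le)) hC
        _ = C * x ^ (-α) := mul_comm _ _
    · exact integrableOn_const measure_Ioo_lt_top.ne
    · refine (ae_restrict_iff' measurableSet_Ioo).2 (ae_of_all _ fun t ht => ?_)
      set m := max x (Real.sqrt t) with hm
      have hm0 : 0 < m := lt_of_lt_of_le hx (le_max_left _ _)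
      have h1 : Tendsto (fun ε : ℝ => ε * m) (𝓝[>] 0) (𝓝[>] 0) := by
        refine tendsto_nhdsWithin_of_tendsto_nhds_of_eventually_within _ ?_ ?_
        · have : Tendsto (fun ε : ℝ => ε * m) (𝓝 0) (𝓝 (0 * m)) :=
            (continuous_id.mul continuous_const).tendsto 0
          simpa using this.mono_left nhdsWithin_le_nhds
        · exact eventually_mem_nhdsWithin.mono fun ε hε => mul_pos hε hm0
      have h3 : Tendsto (fun ε : ℝ => m ^ (-α) * ((ε * m) ^ α * (ν (Ioi (ε * m))).toReal))
          (𝓝[>] 0) (𝓝 (m ^ (-α) * c)) := tendsto_const_nhds.mul (hlim.comp h1)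
      rw [mul_comm c]
      refine h3.congr' ?_
      filter_upwards [self_mem_nhdsWithin] with ε (hε : ε ∈ Ioi (0:ℝ))
      exact (aux_id α ε m _ hε hm0).symm
  refine Tendsto.congr' ?_ hdct
  filter_upwards [self_mem_nhdsWithin] with ε (hε : ε ∈ Ioi (0:ℝ))
  rw [integral_const_mul, aux_layer x ε ν hx hε hfin]
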